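/- arXiv:1602.02172 — 2 statements merged into one kernel-verified Lean document; each statement's English description precedes it below -/
import Mathlib

section
/- For two symmetric positive semi-definite N×N matrices K and L and λ > 0, the spectral norm of K(K + Nλ I)^{-1} − L(L + Nλ I)^{-1} is at most ‖K − L‖/(Nλ). -/
/-- The spectral (operator) norm of a real matrix. -/
noncomputable def specNorm {n : Type*} [Fintype n] [DecidableEq n] (A : Matrix n n ℝ) : ℝ :=
  ‖Matrix.toEuclideanCLM (𝕜 := ℝ) A‖

open Matrix in
lemma smul_one_posDef {n : Type*} [Fintype n] [DecidableEq n] [Nonempty n]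
    {μ : ℝ} (hμ : 0 < μ) : (μ • (1 : Matrix n n ℝ)).PosDef := by
  rw [smul_one_eq_diagonal]
  exact posDef_diagonal_iff.mpr fun _ => hμ

open Matrix in
set_option synthInstance.maxHeartbeats 1000000 in
lemma aux_inv_bound {n : Type*} [Fintype n] [DecidableEq n] [Nonempty n]
    (M : Matrix n n ℝ) (hM : M.PosSemidef) (μ : ℝ) (hμ : 0 < μ) :
    specNorm (M + μ • 1)⁻¹ ≤ 1 / μ := by
  unfold specNorm
  set A : Matrix n n ℝ := M + μ • 1 with hAdef
  have hA : A.PosDef := Matrix.PosDef.posSemidef_add hM (smul_one_posDef hμ)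
  have hdet : IsUnit A.det := isUnit_iff_ne_zero.mpr hA.det_pos.ne'
  have h1 : A * A⁻¹ = 1 := Matrix.mul_nonsing_inv A hdet
  set T := Matrix.toEuclideanCLM (𝕜 := ℝ) A
  set S := Matrix.toEuclideanCLM (𝕜 := ℝ) A⁻¹
  have hTS : T * S = 1 := by
    rw [show T * S = Matrix.toEuclideanCLM (𝕜 := ℝ) (A * A⁻¹) from (map_mul _ _ _).symm, h1,
      _root_.map_one]
  refine ContinuousLinearMap.opNorm_le_bound _ (by positivity) fun y => ?_
  set x := S y with hx
  have hTx : T x = y := by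
    have := congrArg (fun f => f y) hTS
    simpa [ContinuousLinearMap.mul_apply] using this
  -- coercivity : μ * ‖x‖^2 ≤ ⟪x, T x⟫
  have hco : μ * ‖x‖ ^ 2 ≤ inner (𝕜 := ℝ) x (T x) := by
    set v : n → ℝ := WithLp.equiv 2 _ x with hv
    have hxv : x = (WithLp.equiv 2 (n → ℝ)).symm v := by simp [hv]
    have hTxv : T x = (WithLp.equiv 2 (n → ℝ)).symm (A *ᵥ v) := by
      rw [hxv]
      simp [T, Matrix.toEuclideanCLM_toLp, Matrix.toLin'_apply]
    have hinner : inner (𝕜 := ℝ) x (T x) = star v ⬝ᵥ (A *ᵥ v) := by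
      rw [hTxv, hxv]; exact dotProduct_comm _ _
    have hAv : star v ⬝ᵥ (A *ᵥ v) = star v ⬝ᵥ (M *ᵥ v) + μ * (star v ⬝ᵥ v) := by
      rw [hAdef, Matrix.add_mulVec, dotProduct_add, Matrix.smul_mulVec,
        Matrix.one_mulVec, dotProduct_smul, smul_eq_mul]
    have hM0 : 0 ≤ star v ⬝ᵥ (M *ᵥ v) := hM.dotProduct_mulVec_nonneg v
    have hnorm : star v ⬝ᵥ v = ‖x‖ ^ 2 := by
      have : inner (𝕜 := ℝ) x x = star v ⬝ᵥ v := by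
        rw [hxv]; exact dotProduct_comm _ _
      rw [← this, real_inner_self_eq_norm_sq]
    rw [hinner, hAv, hnorm]
    nlinarith
  have hCS : inner (𝕜 := ℝ) x (T x) ≤ ‖x‖ * ‖T x‖ := real_inner_le_norm _ _
  rw [hTx] at hCS hco
  have hxy : μ * ‖x‖ ^ 2 ≤ ‖x‖ * ‖y‖ := le_trans hco hCS
  rcases eq_or_lt_of_le (norm_nonneg x) with h0 | h0
  · rw [← h0]; positivity
  · have : μ * ‖x‖ ≤ ‖y‖ := by
      have := mul_le_mul_of_nonneg_right (le_refl (1:ℝ)) h0.le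
      nlinarith
    rw [div_mul_eq_mul_div, le_div_iff₀ hμ]
    linarith [this]

set_option synthInstance.maxHeartbeats 1000000 in
set_option maxHeartbeats 2000000 in
theorem stmt_3 (N : ℕ) (hN : 0 < N) (K L : Matrix (Fin N) (Fin N) ℝ)
    (hK : K.PosSemidef) (hL : L.PosSemidef) (lam : ℝ) (hlam : 0 < lam) :
    specNorm (K * (K + ((N : ℝ) * lam) • (1 : Matrix (Fin N) (Fin N) ℝ))⁻¹
        - L * (L + ((N : ℝ) * lam) • (1 : Matrix (Fin N) (Fin N) ℝ))⁻¹)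
      ≤ specNorm (K - L) / ((N : ℝ) * lam) := by
  have : Nonempty (Fin N) := ⟨⟨0, hN⟩⟩
  set μ : ℝ := (N : ℝ) * lam with hμdef
  have hμ : 0 < μ := by positivity
  set A : Matrix (Fin N) (Fin N) ℝ := K + μ • 1 with hAdef
  set B : Matrix (Fin N) (Fin N) ℝ := L + μ • 1 with hBdef
  have hA : A.PosDef := Matrix.PosDef.posSemidef_add hK (smul_one_posDef hμ)
  have hB : B.PosDef := Matrix.PosDef.posSemidef_add hL (smul_one_posDef hμ)
  have hdA : IsUnit A.det := isUnit_iff_ne_zero.mpr hA.det_pos.ne'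
  have hdB : IsUnit B.det := isUnit_iff_ne_zero.mpr hB.det_pos.ne'
  have hA1 : A * A⁻¹ = 1 := Matrix.mul_nonsing_inv A hdA
  have hA2 : A⁻¹ * A = 1 := Matrix.nonsing_inv_mul A hdA
  have hB1 : B * B⁻¹ = 1 := Matrix.mul_nonsing_inv B hdB
  -- the resolvent identity
  have hres : A⁻¹ * (K - L) * B⁻¹ = B⁻¹ - A⁻¹ := by
    have hKL : K - L = A - B := by rw [hAdef, hBdef]; abel
    rw [hKL, Matrix.mul_sub, hA2, Matrix.sub_mul, Matrix.one_mul, Matrix.mul_assoc, hB1,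
      Matrix.mul_one]
  have hKA : K * A⁻¹ = 1 - μ • A⁻¹ := by
    have : K = A - μ • 1 := by rw [hAdef]; abel
    rw [this, Matrix.sub_mul, hA1, Matrix.smul_mul, Matrix.one_mul]
  have hLB : L * B⁻¹ = 1 - μ • B⁻¹ := by
    have : L = B - μ • 1 := by rw [hBdef]; abel
    rw [this, Matrix.sub_mul, hB1, Matrix.smul_mul, Matrix.one_mul]
  have hid : K * A⁻¹ - L * B⁻¹ = μ • (A⁻¹ * (K - L) * B⁻¹) := by
    rw [hKA, hLB, hres, smul_sub]; abel
  rw [show K * (K + ((N : ℝ) * lam) • (1 : Matrix (Fin N) (Fin N) ℝ))⁻¹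
        - L * (L + ((N : ℝ) * lam) • (1 : Matrix (Fin N) (Fin N) ℝ))⁻¹
      = K * A⁻¹ - L * B⁻¹ from rfl, hid]
  -- now estimate norms
  unfold specNorm
  rw [map_smul, map_mul, map_mul]
  have h1 : ‖Matrix.toEuclideanCLM (𝕜 := ℝ) A⁻¹‖ ≤ 1 / μ := aux_inv_bound K hK μ hμ
  have h2 : ‖Matrix.toEuclideanCLM (𝕜 := ℝ) B⁻¹‖ ≤ 1 / μ := aux_inv_bound L hL μ hμ
  set a := ‖Matrix.toEuclideanCLM (𝕜 := ℝ) A⁻¹‖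
  set b := ‖Matrix.toEuclideanCLM (𝕜 := ℝ) B⁻¹‖
  set d := ‖Matrix.toEuclideanCLM (𝕜 := ℝ) (K - L)‖
  have ha : 0 ≤ a := norm_nonneg _
  have hb : 0 ≤ b := norm_nonneg _
  have hd : 0 ≤ d := norm_nonneg _
  have hmul : ‖Matrix.toEuclideanCLM (𝕜 := ℝ) A⁻¹ * Matrix.toEuclideanCLM (𝕜 := ℝ) (K - L) *
      Matrix.toEuclideanCLM (𝕜 := ℝ) B⁻¹‖ ≤ a * d * b :=
    le_trans (norm_mul_le _ _) (by
      exact mul_le_mul_of_nonneg_right (norm_mul_le _ _) hb)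
  have hμn : ‖μ‖ = μ := abs_of_pos hμ
  calc ‖μ • (Matrix.toEuclideanCLM (𝕜 := ℝ) A⁻¹ * Matrix.toEuclideanCLM (𝕜 := ℝ) (K - L) *
        Matrix.toEuclideanCLM (𝕜 := ℝ) B⁻¹)‖
      ≤ ‖μ‖ * ‖Matrix.toEuclideanCLM (𝕜 := ℝ) A⁻¹ * Matrix.toEuclideanCLM (𝕜 := ℝ) (K - L) *
        Matrix.toEuclideanCLM (𝕜 := ℝ) B⁻¹‖ := ContinuousLinearMap.opNorm_smul_le _ _
    _ ≤ μ * (a * d * b) := by rw [hμn]; exact mul_le_mul_of_nonneg_left hmul hμ.le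
    _ ≤ μ * ((1/μ) * d * (1/μ)) := by
        apply mul_le_mul_of_nonneg_left _ hμ.le
        exact mul_le_mul (mul_le_mul h1 le_rfl hd (by positivity)) h2 hb (by positivity)
    _ = d / μ := by field_simp
end

section
/- If K and L_γ are symmetric PSD N×N matrices with 0 ⪯ K − L_γ ⪯ (Nγ/(1−t)) I for some γ > 0 and t ∈ (0,1), then for any λ > 0, ‖K(K + NλI)^{-1} − L_γ(L_γ + NλI)^{-1}‖ ≤ (γ/λ)/(1−t). -/
set_option synthInstance.maxHeartbeats 1000000
set_option maxHeartbeats 1000000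

namespace Matrix.PosSemidef

open scoped MatrixOrder

variable {n : Type*} [Fintype n] [DecidableEq n]

noncomputable def sqrt {A : Matrix n n ℝ} (_hA : A.PosSemidef) : Matrix n n ℝ := CFC.sqrt A

lemma posSemidef_sqrt {A : Matrix n n ℝ} (hA : A.PosSemidef) : hA.sqrt.PosSemidef :=
  Matrix.nonneg_iff_posSemidef.mp (CFC.sqrt_nonneg A)

lemma sqrt_mul_self {A : Matrix n n ℝ} (hA : A.PosSemidef) : hA.sqrt * hA.sqrt = A :=
  CFC.sqrt_mul_sqrt_self A (Matrix.nonneg_iff_posSemidef.mpr hA)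

end Matrix.PosSemidef

namespace SpecAux

open Matrix

variable {n : Type*} [Fintype n] [DecidableEq n]

lemma psd_dot {A : Matrix n n ℝ} (hA : A.PosSemidef) (x : n → ℝ) :
    0 ≤ x ⬝ᵥ A *ᵥ x := by
  simpa using hA.dotProduct_mulVec_nonneg x

lemma psd_smul {A : Matrix n n ℝ} (hA : A.PosSemidef) {c : ℝ} (hc : 0 ≤ c) :
    (c • A).PosSemidef := by
  refine Matrix.PosSemidef.of_dotProduct_mulVec_nonneg ?_ fun x => ?_
  · show (c • A)ᴴ = c • A
    rw [conjTranspose_smul, hA.1]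
    simp
  · rw [smul_mulVec, dotProduct_smul, smul_eq_mul]
    exact mul_nonneg hc (by simpa using hA.dotProduct_mulVec_nonneg x)

lemma specNorm_nonneg (A : Matrix n n ℝ) : 0 ≤ specNorm A := norm_nonneg _


lemma specNorm_mul_le (A B : Matrix n n ℝ) : specNorm (A * B) ≤ specNorm A * specNorm B := by
  rw [specNorm, _root_.map_mul]
  exact norm_mul_le _ _

lemma euclid_norm_sq (v : n → ℝ) :
    ‖(WithLp.equiv 2 (n → ℝ)).symm v‖ ^ 2 = v ⬝ᵥ v := by
  rw [← real_inner_self_eq_norm_sq]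
  simp [PiLp.inner_apply, dotProduct, EuclideanSpace.norm_eq, Real.sq_sqrt, Finset.sum_nonneg, mul_self_nonneg, sq]

lemma norm_le_of_psd {A : Matrix n n ℝ} {β : ℝ} (hA : A.PosSemidef) (hβ : 0 ≤ β)
    (h2 : (β • (1 : Matrix n n ℝ) - A).PosSemidef) : specNorm A ≤ β := by
  rw [specNorm]
  refine ContinuousLinearMap.opNorm_le_bound _ hβ fun x => ?_
  set y : n → ℝ := (WithLp.equiv 2 (n → ℝ)) x with hy
  have hx : x = (WithLp.equiv 2 (n → ℝ)).symm y := by simp [hy]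
  have hTx : Matrix.toEuclideanCLM (𝕜 := ℝ) A x = (WithLp.equiv 2 (n → ℝ)).symm (A *ᵥ y) := by
    rw [hx]; rfl
  -- quadratic form inequalities
  have q2 : ∀ z, z ⬝ᵥ A *ᵥ z ≤ β * (z ⬝ᵥ z) := by
    intro z
    have h := psd_dot h2 z
    simp only [sub_mulVec, smul_mulVec, one_mulVec, dotProduct_sub, dotProduct_smul,
      smul_eq_mul] at h
    linarith
  have hAA : (β • A - A * A).PosSemidef := by
    set S := hA.sqrt with hSdef
    have hS : S.PosSemidef := hA.posSemidef_sqrt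
    have hSS : S * S = A := hA.sqrt_mul_self
    have h3 := h2.mul_mul_conjTranspose_same S
    rw [hS.isHermitian] at h3
    have he : S * (β • (1 : Matrix n n ℝ) - A) * S = β • A - A * A := by
      calc S * (β • (1 : Matrix n n ℝ) - A) * S
          = β • (S * S) - S * A * S := by
            rw [mul_sub, sub_mul, mul_smul_comm, smul_mul_assoc, mul_one]
        _ = β • A - A * A := by
            rw [hSS, ← hSS]
            congr 1
            simp only [mul_assoc]
      
    rwa [he] at h3
  have q3 : y ⬝ᵥ (A * A) *ᵥ y ≤ β * (y ⬝ᵥ A *ᵥ y) := by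
    have h := psd_dot hAA y
    simp only [sub_mulVec, smul_mulVec, dotProduct_sub, dotProduct_smul,
      smul_eq_mul] at h
    linarith
  have hAT : Aᵀ = A := by
    have h : Aᴴ = A := hA.1
    rwa [Matrix.conjTranspose_eq_transpose_of_trivial] at h
  have key : (A *ᵥ y) ⬝ᵥ (A *ᵥ y) = y ⬝ᵥ (A * A) *ᵥ y := by
    rw [← mulVec_mulVec, dotProduct_mulVec y A (A *ᵥ y)]
    congr 1
    rw [← hAT, mulVec_transpose, hAT]
  have hb := euclid_norm_sq (A *ᵥ y)
  have ha : ‖x‖ ^ 2 = y ⬝ᵥ y := by rw [hx]; exact euclid_norm_sq y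
  rw [hTx]
  have h0 : 0 ≤ y ⬝ᵥ A *ᵥ y := psd_dot hA y
  have hsq : ‖(WithLp.equiv 2 (n → ℝ)).symm (A *ᵥ y)‖ ^ 2 ≤ (β * ‖x‖) ^ 2 := by
    rw [hb, key, mul_pow, ha]
    nlinarith [q3, mul_le_mul_of_nonneg_left (q2 y) hβ]
  exact le_of_sq_le_sq hsq (by positivity)

lemma inv_bound {A : Matrix n n ℝ} (hA : A.PosSemidef) {c : ℝ} (hc : 0 < c) :
    specNorm (A + c • (1 : Matrix n n ℝ))⁻¹ ≤ c⁻¹ := by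
  set M := A + c • (1 : Matrix n n ℝ) with hMdef
  have hc1 : (c • (1 : Matrix n n ℝ)).PosDef := by
    rw [smul_one_eq_diagonal]
    exact posDef_diagonal_iff.mpr fun _ => hc
  have hM : M.PosDef := Matrix.PosDef.posSemidef_add hA hc1
  have hdet : IsUnit M.det := hM.det_pos.ne'.isUnit
  have hMM : M * M⁻¹ = 1 := mul_nonsing_inv M hdet
  have hMM' : M⁻¹ * M = 1 := nonsing_inv_mul M hdet
  have hMinv : M⁻¹.PosDef := hM.inv
  set S := hMinv.posSemidef.sqrt with hSdef
  have hSh : Sᴴ = S := hMinv.posSemidef.posSemidef_sqrt.isHermitian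
  have hSS : S * S = M⁻¹ := hMinv.posSemidef.sqrt_mul_self
  have hcomm : S * M⁻¹ = M⁻¹ * S := by
    rw [← hSS]
    simp only [mul_assoc]
  have hSM : S * M = M * S := by
    calc S * M = M * M⁻¹ * S * M := by rw [hMM, one_mul]
      _ = M * (S * M⁻¹) * M := by rw [mul_assoc M M⁻¹ S, ← hcomm]
      _ = M * S * (M⁻¹ * M) := by simp only [mul_assoc]
      _ = M * S := by rw [hMM', mul_one]
  have hSMS : S * M * S = 1 := by rw [hSM, mul_assoc, hSS, hMM]
  have hA_eq : A = M - c • (1 : Matrix n n ℝ) := by rw [hMdef]; abel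
  have hconj : S * A * S = 1 - c • M⁻¹ := by
    rw [hA_eq]
    calc S * (M - c • (1 : Matrix n n ℝ)) * S
        = S * M * S - c • (S * S) := by
          rw [mul_sub, sub_mul, mul_smul_comm, smul_mul_assoc, mul_one]
      _ = 1 - c • M⁻¹ := by rw [hSMS, hSS]
  have hkey : (c⁻¹ • (1 : Matrix n n ℝ) - M⁻¹) = c⁻¹ • (S * A * S) := by
    rw [hconj, smul_sub, smul_smul, inv_mul_cancel₀ hc.ne', one_smul]
  have hSAS : (S * A * S).PosSemidef := by
    have := hA.mul_mul_conjTranspose_same S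
    rwa [hSh] at this
  have hpsd2 : (c⁻¹ • (1 : Matrix n n ℝ) - M⁻¹).PosSemidef := by
    rw [hkey]; exact psd_smul hSAS (inv_nonneg.mpr hc.le)
  exact norm_le_of_psd hMinv.posSemidef (inv_nonneg.mpr hc.le) hpsd2

end SpecAux

theorem stmt_6 (N : ℕ) (hN : 0 < N) (K Lγ : Matrix (Fin N) (Fin N) ℝ)
    (hK : K.PosSemidef) (hLγ : Lγ.PosSemidef) (γ lam t : ℝ)
    (hγ : 0 < γ) (hlam : 0 < lam) (ht : t ∈ Set.Ioo (0 : ℝ) 1)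
    (hlow : (K - Lγ).PosSemidef)
    (hup : (((N : ℝ) * γ / (1 - t)) • (1 : Matrix (Fin N) (Fin N) ℝ) - (K - Lγ)).PosSemidef) :
    specNorm (K * (K + ((N : ℝ) * lam) • (1 : Matrix (Fin N) (Fin N) ℝ))⁻¹
        - Lγ * (Lγ + ((N : ℝ) * lam) • (1 : Matrix (Fin N) (Fin N) ℝ))⁻¹)
      ≤ (γ / lam) / (1 - t) := by
  open Matrix SpecAux in
  set c : ℝ := (N : ℝ) * lam with hcdef
  set β : ℝ := (N : ℝ) * γ / (1 - t) with hβdef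
  have hNpos : (0 : ℝ) < N := Nat.cast_pos.mpr hN
  have hc : 0 < c := mul_pos hNpos hlam
  have h1t : 0 < 1 - t := by have := ht.2; linarith
  have hβ : 0 ≤ β := by positivity
  set MK := K + c • (1 : Matrix (Fin N) (Fin N) ℝ) with hMKdef
  set ML := Lγ + c • (1 : Matrix (Fin N) (Fin N) ℝ) with hMLdef
  have hc1 : (c • (1 : Matrix (Fin N) (Fin N) ℝ)).PosDef := by
    rw [Matrix.smul_one_eq_diagonal]
    exact Matrix.posDef_diagonal_iff.mpr fun _ => hc
  have hMK : MK.PosDef := Matrix.PosDef.posSemidef_add hK hc1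
  have hML : ML.PosDef := Matrix.PosDef.posSemidef_add hLγ hc1
  have hMKi : MK * MK⁻¹ = 1 := Matrix.mul_nonsing_inv MK hMK.det_pos.ne'.isUnit
  have hMLi : ML * ML⁻¹ = 1 := Matrix.mul_nonsing_inv ML hML.det_pos.ne'.isUnit
  have hMKi' : MK⁻¹ * MK = 1 := Matrix.nonsing_inv_mul MK hMK.det_pos.ne'.isUnit
  -- algebraic identity
  have hKid : K * MK⁻¹ = 1 - c • MK⁻¹ := by
    have : K = MK - c • (1 : Matrix (Fin N) (Fin N) ℝ) := by rw [hMKdef]; abel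
    rw [this, sub_mul, hMKi, smul_mul_assoc, one_mul]
  have hLid : Lγ * ML⁻¹ = 1 - c • ML⁻¹ := by
    have : Lγ = ML - c • (1 : Matrix (Fin N) (Fin N) ℝ) := by rw [hMLdef]; abel
    rw [this, sub_mul, hMLi, smul_mul_assoc, one_mul]
  have hdiff : MK⁻¹ * (K - Lγ) * ML⁻¹ = ML⁻¹ - MK⁻¹ := by
    have h1 : K - Lγ = MK - ML := by rw [hMKdef, hMLdef]; abel
    rw [h1, mul_sub, sub_mul, hMKi', one_mul, mul_assoc, hMLi, mul_one]
  have hD : K * MK⁻¹ - Lγ * ML⁻¹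
      = (c • (1 : Matrix (Fin N) (Fin N) ℝ)) * (MK⁻¹ * (K - Lγ) * ML⁻¹) := by
    rw [smul_mul_assoc, one_mul, hKid, hLid, hdiff, smul_sub]
    abel
  rw [hD]
  have hbK : specNorm MK⁻¹ ≤ c⁻¹ := inv_bound hK hc
  have hbL : specNorm ML⁻¹ ≤ c⁻¹ := inv_bound hLγ hc
  have hbM : specNorm (K - Lγ) ≤ β := norm_le_of_psd hlow hβ hup
  have hX : specNorm (MK⁻¹ * (K - Lγ) * ML⁻¹) ≤ c⁻¹ * β * c⁻¹ := by
    calc specNorm (MK⁻¹ * (K - Lγ) * ML⁻¹)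
        ≤ specNorm (MK⁻¹ * (K - Lγ)) * specNorm ML⁻¹ := specNorm_mul_le _ _
      _ ≤ specNorm MK⁻¹ * specNorm (K - Lγ) * specNorm ML⁻¹ := by
          apply mul_le_mul_of_nonneg_right (specNorm_mul_le _ _) (specNorm_nonneg _)
      _ ≤ c⁻¹ * β * c⁻¹ := by
          apply mul_le_mul
          · exact mul_le_mul hbK hbM (specNorm_nonneg _) (inv_nonneg.mpr hc.le)
          · exact hbL
          · exact specNorm_nonneg _
          · positivity
  have hone : specNorm (c • (1 : Matrix (Fin N) (Fin N) ℝ)) ≤ c := by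
    refine norm_le_of_psd hc1.posSemidef hc.le ?_
    rw [sub_self]
    exact Matrix.PosSemidef.zero
  calc specNorm ((c • (1 : Matrix (Fin N) (Fin N) ℝ)) * (MK⁻¹ * (K - Lγ) * ML⁻¹))
      ≤ specNorm (c • (1 : Matrix (Fin N) (Fin N) ℝ)) * specNorm (MK⁻¹ * (K - Lγ) * ML⁻¹) :=
        specNorm_mul_le _ _
    _ ≤ c * (c⁻¹ * β * c⁻¹) :=
        mul_le_mul hone hX (specNorm_nonneg _) hc.le
    _ = (γ / lam) / (1 - t) := by
        rw [hβdef, hcdef]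
        field_simp
end
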